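/- There do not exist 2×2 complex matrices A_0, A_1, A_2, B_0, B_1, B_2, C_0, C_1, C_2 such that tr(A_i B_j C_k) = ε_{ijk} + δ_{i,2}δ_{j,2}δ_{k,2} for all i,j,k ∈ {0,1,2}. In other words, the RVB plaquette tensor λ has no MPS representation with uniform bond dimension 2: MaMu_3(2) does not restrict to λ. -/

import Mathlib

/-- The totally antisymmetric Levi-Civita symbol on `{0,1,2}`, with `ε₀₁₂ = 1`. -/
noncomputable def levi (i j k : Fin 3) : ℂ :=
  ((((j : ℤ) - (i : ℤ)) * (((k : ℤ) - (j : ℤ))) * (((k : ℤ) - (i : ℤ))) : ℤ) : ℂ) / 2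

open Matrix

/-- rank ≤ 1 factorization of a singular 2×2 matrix -/
lemma rank1 (M : Matrix (Fin 2) (Fin 2) ℂ) (h : M.det = 0) :
    ∃ u v : Fin 2 → ℂ, ∀ i j, M i j = u i * v j := by
  rw [Matrix.det_fin_two] at h
  by_cases hp : M 0 0 = 0
  · by_cases hq : M 0 1 = 0
    · refine ⟨![0, 1], ![M 1 0, M 1 1], ?_⟩
      intro i j; fin_cases i <;> fin_cases j <;> simp [hp, hq]
    · have hr : M 1 0 = 0 := by
        have : M 0 1 * M 1 0 = 0 := by linear_combination -h + (M 1 1) * hp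
        rcases mul_eq_zero.mp this with h' | h'
        · exact absurd h' hq
        · exact h'
      refine ⟨![M 0 1, M 1 1], ![0, 1], ?_⟩
      intro i j; fin_cases i <;> fin_cases j <;> simp [hp, hr]
  · refine ⟨![M 0 0, M 1 0], ![1, M 0 1 / M 0 0], ?_⟩
    intro i j
    fin_cases i <;> fin_cases j <;> simp [hp] <;> field_simp
    all_goals first
      | linear_combination 2 * h
      | linear_combination -h
      | linear_combination h
      | linear_combination -2 * h

lemma det3_sum2 (x z y w : Fin 3 → ℂ) :
    (Matrix.of fun i j => x i * y j + z i * w j :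
      Matrix (Fin 3) (Fin 3) ℂ).det = 0 := by
  rw [Matrix.det_fin_three]
  simp only [Matrix.of_apply]
  ring

lemma det_trace_zero (A B : Fin 3 → Matrix (Fin 2) (Fin 2) ℂ)
    (M : Matrix (Fin 2) (Fin 2) ℂ) (hM : M.det = 0) :
    (Matrix.of fun i j => (A i * B j * M).trace :
      Matrix (Fin 3) (Fin 3) ℂ).det = 0 := by
  obtain ⟨u, v, huv⟩ := rank1 M hM
  have key : ∀ i j : Fin 3, (A i * B j * M).trace
      = (v 0 * A i 0 0 + v 1 * A i 1 0) * (B j 0 0 * u 0 + B j 0 1 * u 1)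
      + (v 0 * A i 0 1 + v 1 * A i 1 1) * (B j 1 0 * u 0 + B j 1 1 * u 1) := by
    intro i j
    simp [Matrix.trace_fin_two, Matrix.mul_apply, Fin.sum_univ_two, huv]
    ring
  calc (Matrix.of fun i j => (A i * B j * M).trace :
      Matrix (Fin 3) (Fin 3) ℂ).det
      = (Matrix.of fun i j =>
          (fun i => v 0 * A i 0 0 + v 1 * A i 1 0) i * (fun j => B j 0 0 * u 0 + B j 0 1 * u 1) j
        + (fun i => v 0 * A i 0 1 + v 1 * A i 1 1) i * (fun j => B j 1 0 * u 0 + B j 1 1 * u 1) j :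
          Matrix (Fin 3) (Fin 3) ℂ).det := by
        congr 1; ext i j; simpa using key i j
    _ = 0 := det3_sum2 _ _ _ _

lemma quad_zero (e β γ : ℂ) (he : e ≠ 0)
    (h : ∀ t : ℂ, e * t ^ 2 + β * t + γ = 0 → t = 0) : β = 0 ∧ γ = 0 := by
  obtain ⟨s, hs⟩ := IsAlgClosed.exists_pow_nat_eq (k := ℂ) (β ^ 2 - 4 * e * γ) zero_lt_two
  have h1 : (-β + s) / (2 * e) = 0 := by
    apply h
    field_simp
    linear_combination hs
  have h2 : (-β - s) / (2 * e) = 0 := by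
    apply h
    field_simp
    linear_combination hs
  have h2e : (2 : ℂ) * e ≠ 0 := by simp [he]
  have e1 : -β + s = 0 := by
    have := div_eq_zero_iff.mp h1
    tauto
  have e2 : -β - s = 0 := by
    have := div_eq_zero_iff.mp h2
    tauto
  have hβ : β = 0 := by linear_combination (-1/2) * e1 + (-1/2) * e2
  refine ⟨hβ, ?_⟩
  have hs0 : s = 0 := by linear_combination e1 + hβ
  have : 4 * e * γ = 0 := by linear_combination hs + (-s) * hs0 + β * hβ
  have := mul_eq_zero.mp this
  rcases this with h' | h'
  · exact absurd h' (by simp [he])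
  · exact h'

lemma nilspace (a b c p q r : ℂ)
    (f2 : a * a + b * c = 0) (f4 : p * p + q * r = 0)
    (f5 : 2 * a * p + b * r + c * q = 0)
    (h0 : ¬(a = 0 ∧ b = 0 ∧ c = 0)) :
    ∃ μ : ℂ, p = μ * a ∧ q = μ * b ∧ r = μ * c := by
  by_cases hb : b = 0
  · by_cases hc : c = 0
    · exfalso
      have ha : a = 0 := by
        have : a ^ 2 = 0 := by linear_combination f2 - c * hb
        exact pow_eq_zero_iff two_ne_zero |>.mp this
      exact h0 ⟨ha, hb, hc⟩
    · -- c ≠ 0, b = 0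
      have key : (c * p - a * r) ^ 2 = 0 := by
        linear_combination r ^ 2 * f2 + c ^ 2 * f4 + (-c * r) * f5
      have hcp : c * p - a * r = 0 := by
        exact pow_eq_zero_iff two_ne_zero |>.mp key
      refine ⟨r / c, ?_, ?_, ?_⟩
      · field_simp
        linear_combination hcp
      · have hq : c * (c * q - b * r) = 0 := by
          linear_combination (-2 * r) * f2 + c * f5 + (-2 * a) * hcp
        have := mul_eq_zero.mp hq
        rcases this with h' | h'
        · exact absurd h' hc
        · field_simp
          linear_combination h'
      · field_simp
  · have key : (b * p - a * q) ^ 2 = 0 := by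
      linear_combination q ^ 2 * f2 + b ^ 2 * f4 + (-b * q) * f5
    have hbp : b * p - a * q = 0 := by
      exact pow_eq_zero_iff two_ne_zero |>.mp key
    refine ⟨q / b, ?_, ?_, ?_⟩
    · field_simp
      linear_combination hbp
    · field_simp
    · have hr : b * (b * r - c * q) = 0 := by
        linear_combination (-2 * q) * f2 + b * f5 + (-2 * a) * hbp
      have := mul_eq_zero.mp hr
      rcases this with h' | h'
      · exact absurd h' hb
      · field_simp
        linear_combination h'

/-- there are no `2×2` complex matrices `A_i, B_j, C_k` (`i,j,k ∈ {0,1,2}`)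
with `tr(A_i B_j C_k) = ε_{ijk} + δ_{i,2}δ_{j,2}δ_{k,2}`; i.e. the RVB plaquette tensor
`λ` has no MPS representation with uniform bond dimension 2: `MaMu₃(2)` does not restrict
to `λ`. -/
theorem stmt11 :
    ¬ ∃ A B C : Fin 3 → Matrix (Fin 2) (Fin 2) ℂ,
        ∀ i j k : Fin 3,
          (A i * B j * C k).trace
            = levi i j k + if i = 2 ∧ j = 2 ∧ k = 2 then 1 else 0 := by
  rintro ⟨A, B, C, h⟩
  have slice : ∀ c₀ c₁ c₂ : ℂ,
      (c₀ • C 0 + c₁ • C 1 + c₂ • C 2).det = 0 → c₂ = 0 := by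
    intro c₀ c₁ c₂ hdet
    have hL := det_trace_zero A B _ hdet
    have key : (Matrix.of fun i j => (A i * B j * (c₀ • C 0 + c₁ • C 1 + c₂ • C 2)).trace :
        Matrix (Fin 3) (Fin 3) ℂ)
        = !![0, c₂, -c₁; -c₂, 0, c₀; c₁, -c₀, c₂] := by
      ext i j
      have lin : (A i * B j * (c₀ • C 0 + c₁ • C 1 + c₂ • C 2)).trace
          = c₀ * (A i * B j * C 0).trace + c₁ * (A i * B j * C 1).trace
            + c₂ * (A i * B j * C 2).trace := by
        simp [Matrix.mul_add, Matrix.mul_smul, Matrix.trace_add, Matrix.trace_smul,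
          smul_eq_mul]
      rw [Matrix.of_apply, lin, h i j 0, h i j 1, h i j 2]
      fin_cases i <;> fin_cases j <;>
        norm_num [levi, Fin.ext_iff]
    rw [key, Matrix.det_fin_three] at hL
    have hc : c₂ ^ 3 = 0 := by
      simp [Matrix.cons_val', Matrix.cons_val_zero, Matrix.cons_val_one, Matrix.cons_val_two] at hL
      linear_combination hL
    exact pow_eq_zero_iff (three_ne_zero) |>.mp hc
  -- det C₂ ≠ 0
  have hdetC2 : (C 2).det ≠ 0 := by
    intro h0
    have := slice 0 0 1 (by simpa using h0)
    exact one_ne_zero this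
  -- quadratic analysis
  have main : ∀ x y : ℂ,
      ((x • C 0 + y • C 1 : Matrix (Fin 2) (Fin 2) ℂ) 0 0 * (C 2) 1 1
        + (x • C 0 + y • C 1 : Matrix (Fin 2) (Fin 2) ℂ) 1 1 * (C 2) 0 0
        - (x • C 0 + y • C 1 : Matrix (Fin 2) (Fin 2) ℂ) 0 1 * (C 2) 1 0
        - (x • C 0 + y • C 1 : Matrix (Fin 2) (Fin 2) ℂ) 1 0 * (C 2) 0 1) = 0
      ∧ ((x • C 0 + y • C 1 : Matrix (Fin 2) (Fin 2) ℂ) 0 0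
          * (x • C 0 + y • C 1 : Matrix (Fin 2) (Fin 2) ℂ) 1 1
        - (x • C 0 + y • C 1 : Matrix (Fin 2) (Fin 2) ℂ) 0 1
          * (x • C 0 + y • C 1 : Matrix (Fin 2) (Fin 2) ℂ) 1 0) = 0 := by
    intro x y
    apply quad_zero _ _ _ hdetC2
    intro t ht
    apply slice x y t
    rw [Matrix.det_fin_two]
    simp only [Matrix.add_apply, Matrix.smul_apply, smul_eq_mul]
    simp only [Matrix.add_apply, Matrix.smul_apply, smul_eq_mul] at ht
    linear_combination ht - t ^ 2 * Matrix.det_fin_two (C 2)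
  obtain ⟨hb0, hg0⟩ := main 1 0
  obtain ⟨hb1, hg1⟩ := main 0 1
  obtain ⟨-, hg01⟩ := main 1 1
  simp only [one_smul, zero_smul, add_zero, zero_add, Matrix.add_apply, Matrix.zero_apply] at hb0 hg0 hb1 hg1 hg01
  -- pass to the "nilpotent" matrices N0, N1
  set N0 : Matrix (Fin 2) (Fin 2) ℂ := (C 2).adjugate * C 0 with hN0
  set N1 : Matrix (Fin 2) (Fin 2) ℂ := (C 2).adjugate * C 1 with hN1
  have hadj : (C 2).adjugate.det = (C 2).det := by
    rw [Matrix.det_adjugate]; norm_num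
  have e0 : N0 0 0 * N0 1 1 - N0 0 1 * N0 1 0 = 0 := by
    rw [← Matrix.det_fin_two, hN0, Matrix.det_mul, hadj]
    have : (C 0).det = 0 := by rw [Matrix.det_fin_two]; linear_combination hg0
    rw [this, mul_zero]
  have e1 : N1 0 0 * N1 1 1 - N1 0 1 * N1 1 0 = 0 := by
    rw [← Matrix.det_fin_two, hN1, Matrix.det_mul, hadj]
    have : (C 1).det = 0 := by rw [Matrix.det_fin_two]; linear_combination hg1
    rw [this, mul_zero]
  have f1N0 : N0 0 0 + N0 1 1 = 0 := by
    rw [hN0]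
    simp [Matrix.mul_apply, Fin.sum_univ_two, Matrix.adjugate_fin_two]
    linear_combination hb0
  have f1N1 : N1 0 0 + N1 1 1 = 0 := by
    rw [hN1]
    simp [Matrix.mul_apply, Fin.sum_univ_two, Matrix.adjugate_fin_two]
    linear_combination hb1
  have e2 : (N0 0 0 + N1 0 0) * (N0 1 1 + N1 1 1)
      - (N0 0 1 + N1 0 1) * (N0 1 0 + N1 1 0) = 0 := by
    have hsum : (N0 + N1).det = 0 := by
      rw [hN0, hN1, ← Matrix.mul_add, Matrix.det_mul, hadj]
      have : (C 0 + C 1).det = 0 := by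
        rw [Matrix.det_fin_two]
        simp only [Matrix.add_apply]
        linear_combination hg01
      rw [this, mul_zero]
    rw [Matrix.det_fin_two] at hsum
    simp only [Matrix.add_apply] at hsum
    linear_combination hsum
  have f2 : N0 0 0 * N0 0 0 + N0 0 1 * N0 1 0 = 0 := by
    linear_combination (-1) * e0 + N0 0 0 * f1N0
  have f4 : N1 0 0 * N1 0 0 + N1 0 1 * N1 1 0 = 0 := by
    linear_combination (-1) * e1 + N1 0 0 * f1N1
  have f5 : 2 * N0 0 0 * N1 0 0 + N0 0 1 * N1 1 0 + N0 1 0 * N1 0 1 = 0 := by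
    linear_combination (-1) * e2 + e0 + e1 + N0 0 0 * f1N1 + N1 0 0 * f1N0
  have h0 : ¬(N0 0 0 = 0 ∧ N0 0 1 = 0 ∧ N0 1 0 = 0) := by
    rintro ⟨ha, hbb, hcc⟩
    have hdd : N0 1 1 = 0 := by linear_combination f1N0 - ha
    have hN0z : N0 = 0 := by
      ext i j
      fin_cases i <;> fin_cases j <;> simp only [Matrix.zero_apply]
      · exact ha
      · exact hbb
      · exact hcc
      · exact hdd
    have hC0 : C 0 = 0 := by
      have hz : (C 2).det • C 0 = 0 := by
        calc (C 2).det • C 0 = ((C 2).det • (1 : Matrix (Fin 2) (Fin 2) ℂ)) * C 0 := by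
              rw [Matrix.smul_mul, Matrix.one_mul]
        _ = (C 2 * (C 2).adjugate) * C 0 := by rw [Matrix.mul_adjugate]
        _ = C 2 * N0 := by rw [Matrix.mul_assoc, hN0]
        _ = 0 := by rw [hN0z, Matrix.mul_zero]
      rcases smul_eq_zero.mp hz with h' | h'
      · exact absurd h' hdetC2
      · exact h'
    have := h 1 2 0
    rw [hC0, Matrix.mul_zero, Matrix.trace_zero] at this
    rw [if_neg (by decide)] at this
    norm_num [levi] at this
  obtain ⟨μ, hp, hq, hr⟩ := nilspace (N0 0 0) (N0 0 1) (N0 1 0)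
    (N1 0 0) (N1 0 1) (N1 1 0) f2 f4 f5 h0
  have hs : N1 1 1 = μ * N0 1 1 := by linear_combination f1N1 - hp - μ * f1N0
  have hN1eq : N1 = μ • N0 := by
    ext i j
    fin_cases i <;> fin_cases j <;> simp only [Matrix.smul_apply, smul_eq_mul]
    · exact hp
    · exact hq
    · exact hr
    · exact hs
  have hC1 : C 1 = μ • C 0 := by
    have key : (C 2).det • C 1 = (C 2).det • (μ • C 0) := by
      calc (C 2).det • C 1 = ((C 2).det • (1 : Matrix (Fin 2) (Fin 2) ℂ)) * C 1 := by
            rw [Matrix.smul_mul, Matrix.one_mul]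
      _ = (C 2 * (C 2).adjugate) * C 1 := by rw [Matrix.mul_adjugate]
      _ = C 2 * N1 := by rw [Matrix.mul_assoc, hN1]
      _ = C 2 * (μ • N0) := by rw [hN1eq]
      _ = μ • (C 2 * N0) := by rw [Matrix.mul_smul]
      _ = μ • ((C 2 * (C 2).adjugate) * C 0) := by rw [Matrix.mul_assoc, hN0]
      _ = μ • (((C 2).det • (1 : Matrix (Fin 2) (Fin 2) ℂ)) * C 0) := by
            rw [Matrix.mul_adjugate]
      _ = μ • ((C 2).det • C 0) := by rw [Matrix.smul_mul, Matrix.one_mul]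
      _ = (C 2).det • (μ • C 0) := smul_comm _ _ _
    exact smul_right_injective _ hdetC2 key
  have h021 := h 0 2 1
  have h020 := h 0 2 0
  rw [hC1, Matrix.mul_smul, Matrix.trace_smul, smul_eq_mul, h020] at h021
  rw [if_neg (by decide), if_neg (by decide)] at h021
  norm_num [levi] at h021
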